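/- Let R be a commutative Noetherian ring which is a unique factorization domain, and let A and B be finitely generated R-modules. Then Δ_0(A ⊕ B) is associated (equal up to multiplication by a unit of R) to the product Δ_0(A) · Δ_0(B). -/

import Mathlib

open Matrix LinearMap

/-- The ideal of `R` generated by the `k × k` minors of the matrix `M`.
(If `k = 0` this is all of `R`; if `k` exceeds the number of columns it is `0`.) -/
def minorsIdeal {R : Type*} [CommRing R] {n m : ℕ} (M : Matrix (Fin n) (Fin m) R)
    (k : ℕ) : Ideal R :=
  Ideal.span { x | ∃ (r : Fin k → Fin n) (c : Fin k → Fin m), x = (M.submatrix r c).det }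

/-- The `i`-th elementary (Fitting) ideal of a module presented by the `n × m` matrix `M`:
the ideal generated by the `(n - i) × (n - i)` minors of `M`. -/
def elemIdeal {R : Type*} [CommRing R] {n m : ℕ} (M : Matrix (Fin n) (Fin m) R)
    (i : ℕ) : Ideal R :=
  minorsIdeal M (n - i)

/-- `d` is a greatest common divisor of the elements of the ideal `I`. -/
def IsGCDOfIdeal {R : Type*} [CommRing R] (d : R) (I : Ideal R) : Prop :=
  (∀ x ∈ I, d ∣ x) ∧ ∀ e : R, (∀ x ∈ I, e ∣ x) → e ∣ d

namespace CharPolyProdAux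

open Function Finset

variable {R : Type*} [CommRing R]

section Det

variable {η : Type*} [Fintype η] [DecidableEq η]

theorem det_eq_alt (v : η → η → R) :
    (Matrix.of v).det = (Matrix.detRowAlternating : (η → R) [⋀^η]→ₗ[R] R) v := rfl

theorem det_rows_eq_zero (S : Matrix η η R) {i j : η} (hij : i ≠ j) (h : S i = S j) :
    S.det = 0 :=
  (Matrix.detRowAlternating : (η → R) [⋀^η]→ₗ[R] R).map_eq_zero_of_eq S h hij

theorem det_expand {τ : Type*} (A : η → Finset τ) (c : η → τ → R) (w : η → τ → η → R) :
    (Matrix.of fun i => ∑ j ∈ A i, c i j • w i j).det =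
      ∑ r ∈ Fintype.piFinset A,
        (∏ i, c i (r i)) * (Matrix.of fun i => w i (r i)).det := by
  rw [det_eq_alt]
  have h1 := (Matrix.detRowAlternating :
      (η → R) [⋀^η]→ₗ[R] R).toMultilinearMap.map_sum_finset
      (g := fun i j => c i j • w i j) (A := A)
  rw [show ((Matrix.detRowAlternating : (η → R) [⋀^η]→ₗ[R] R)
        (fun i => ∑ j ∈ A i, c i j • w i j))
      = (Matrix.detRowAlternating :
        (η → R) [⋀^η]→ₗ[R] R).toMultilinearMap (fun i => ∑ j ∈ A i, c i j • w i j) from rfl,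
    h1]
  refine Finset.sum_congr rfl fun r _ => ?_
  rw [MultilinearMap.map_smul_univ]
  rw [smul_eq_mul]
  rfl

/-- If more than `card {j // q j}` rows (namely all rows satisfying `p`) are supported on the
columns satisfying `q`, the determinant vanishes. -/
theorem det_eq_zero_of_card_lt (S : Matrix η η R) (p q : η → Prop)
    [DecidablePred p] [DecidablePred q]
    (hsupp : ∀ i j, p i → ¬ q j → S i j = 0)
    (hcard : Fintype.card {j // q j} < Fintype.card {i // p i}) :
    S.det = 0 := by
  classical
  have hrow : ∀ i, S i = ∑ j ∈ (if p i then univ.filter q else {i}),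
      (if p i then S i j else 1) • (if p i then (Pi.single j 1 : η → R) else S i) := by
    intro i
    by_cases hp : p i
    · simp only [hp, if_true]
      funext j'
      rw [Finset.sum_apply]
      simp only [Pi.smul_apply, smul_eq_mul, Pi.single_apply, mul_ite, mul_one, mul_zero]
      rw [Finset.sum_ite_eq]
      simp only [Finset.mem_filter, Finset.mem_univ, true_and]
      by_cases hq : q j'
      · simp [hq]
      · simp [hq, hsupp i j' hp hq]
    · simp [hp]
  have hS : S = Matrix.of fun i => ∑ j ∈ (if p i then univ.filter q else {i}),
      (if p i then S i j else 1) • (if p i then (Pi.single j 1 : η → R) else S i) :=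
    funext hrow
  rw [hS, det_expand]
  refine Finset.sum_eq_zero fun r hr => ?_
  have hmaps : ∀ a ∈ univ.filter p, r a ∈ univ.filter q := by
    intro a ha
    have := (Fintype.mem_piFinset.mp hr) a
    rw [if_pos (Finset.mem_filter.mp ha).2] at this
    exact this
  rw [Fintype.card_subtype, Fintype.card_subtype] at hcard
  obtain ⟨a, ha, b, hb, hab, heq⟩ :=
    Finset.exists_ne_map_eq_of_card_lt_of_maps_to hcard hmaps
  have hpa := (Finset.mem_filter.mp ha).2
  have hpb := (Finset.mem_filter.mp hb).2
  have : (Matrix.of fun i => if p i then (Pi.single (r i) 1 : η → R) else S i).det = 0 := by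
    refine det_rows_eq_zero _ hab ?_
    show (if p a then (Pi.single (r a) 1 : η → R) else S a)
        = (if p b then (Pi.single (r b) 1 : η → R) else S b)
    rw [if_pos hpa, if_pos hpb, heq]
  rw [this, mul_zero]

/-- Block-triangular splitting of a determinant along complementary row/column supports. -/
theorem det_split {α β : Type*} [Fintype α] [DecidableEq α] [Fintype β] [DecidableEq β]
    (S : Matrix η η R) (p q : η → Prop) [DecidablePred p] [DecidablePred q]
    (h1 : ∀ i j, p i → ¬ q j → S i j = 0) (h2 : ∀ i j, ¬ p i → q j → S i j = 0)
    (eP : α ≃ {i // p i}) (eQ : α ≃ {j // q j})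
    (eP' : β ≃ {i // ¬ p i}) (eQ' : β ≃ {j // ¬ q j}) :
    ∃ u : Rˣ, S.det = u *
      ((S.submatrix (fun a => (eP a : η)) (fun a => (eQ a : η))).det *
       (S.submatrix (fun b => (eP' b : η)) (fun b => (eQ' b : η))).det) := by
  classical
  set Ep : α ⊕ β ≃ η := (Equiv.sumCongr eP eP').trans (Equiv.sumCompl p) with hEp
  set Eq2 : α ⊕ β ≃ η := (Equiv.sumCongr eQ eQ').trans (Equiv.sumCompl q) with hEq2
  have hT : S.submatrix Ep Eq2 =
      Matrix.fromBlocks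
        (S.submatrix (fun a => (eP a : η)) (fun a => (eQ a : η))) 0 0
        (S.submatrix (fun b => (eP' b : η)) (fun b => (eQ' b : η))) := by
    ext i j
    cases i with
    | inl a =>
      cases j with
      | inl a' => simp [hEp, hEq2]
      | inr b' =>
        simp only [Matrix.submatrix_apply, Matrix.fromBlocks_apply₁₂, Matrix.zero_apply,
          hEp, hEq2, Equiv.trans_apply, Equiv.sumCongr_apply, Sum.map_inl, Sum.map_inr,
          Equiv.sumCompl_apply_inl, Equiv.sumCompl_apply_inr]
        exact h1 _ _ (eP a).2 (eQ' b').2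
    | inr b =>
      cases j with
      | inl a' =>
        simp only [Matrix.submatrix_apply, Matrix.fromBlocks_apply₂₁, Matrix.zero_apply,
          hEp, hEq2, Equiv.trans_apply, Equiv.sumCongr_apply, Sum.map_inl, Sum.map_inr,
          Equiv.sumCompl_apply_inl, Equiv.sumCompl_apply_inr]
        exact h2 _ _ (eP' b).2 (eQ a').2
      | inr b' => simp [hEp, hEq2]
  set π : Equiv.Perm (α ⊕ β) := Eq2.trans Ep.symm with hπ
  have hsub : S.submatrix Ep Eq2 = (S.submatrix Ep Ep).submatrix _root_.id ⇑π := by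
    ext i j
    simp [hπ]
  have hdT : (S.submatrix Ep Eq2).det = (Equiv.Perm.sign π : ℤ) * S.det := by
    rw [hsub, Matrix.det_permute', Matrix.det_submatrix_equiv_self]
  set u0 : Rˣ := Units.map (Int.castRingHom R).toMonoidHom
    ((Equiv.Perm.sign π) : ℤˣ) with hu0
  refine ⟨u0⁻¹, ?_⟩
  have hu0val : (u0 : R) = ((Equiv.Perm.sign π : ℤ) : R) := rfl
  have : (S.submatrix Ep Eq2).det =
      (S.submatrix (fun a => (eP a : η)) (fun a => (eQ a : η))).det *
      (S.submatrix (fun b => (eP' b : η)) (fun b => (eQ' b : η))).det := by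
    rw [hT, Matrix.det_fromBlocks_zero₁₂]
  rw [← this, hdT]
  rw [show ((Equiv.Perm.sign π : ℤ) : R) = (u0 : R) from rfl]
  rw [← mul_assoc, Units.inv_mul, one_mul]


end Det

/-- The ideal generated by determinants of matrices all of whose rows lie in `K`. -/
def detIdeal {η : Type*} [Fintype η] [DecidableEq η] (K : Submodule R (η → R)) : Ideal R :=
  Ideal.span {x | ∃ v : η → η → R, (∀ i, v i ∈ K) ∧ x = (Matrix.of v).det}

theorem det_mem_detIdeal {η : Type*} [Fintype η] [DecidableEq η] (K : Submodule R (η → R))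
    (v : η → η → R) (hv : ∀ i, v i ∈ K) : (Matrix.of v).det ∈ detIdeal K :=
  Ideal.subset_span ⟨v, hv, rfl⟩

theorem detIdeal_range {ι κ : Type*} [Fintype ι] [DecidableEq ι] [Fintype κ] [DecidableEq κ]
    (M : Matrix ι κ R) :
    detIdeal (LinearMap.range M.mulVecLin) =
      Ideal.span {x | ∃ (r : ι → ι) (c : ι → κ), x = (M.submatrix r c).det} := by
  apply le_antisymm
  · rw [detIdeal, Ideal.span_le]
    rintro x ⟨v, hv, rfl⟩
    have hw : ∀ i, ∃ w : κ → R, M.mulVec w = v i := fun i => hv i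
    choose w hwv using hw
    have hveq : Matrix.of v = Matrix.of fun i => ∑ k : κ, (w i k) • (fun j => M j k) := by
      funext i j
      have : v i j = (M.mulVec (w i)) j := by rw [hwv]
      rw [show (Matrix.of v) i j = v i j from rfl, this,
        show (Matrix.of fun i => ∑ k : κ, (w i k) • (fun j => M j k)) i j
          = (∑ k : κ, (w i k) • (fun j' => M j' k)) j from rfl]
      rw [Finset.sum_apply]
      simp only [Pi.smul_apply, smul_eq_mul]
      simp [Matrix.mulVec, dotProduct, mul_comm]
    rw [hveq, det_expand (fun _ => (univ : Finset κ)) w (fun _ k => fun j => M j k)]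
    refine Ideal.sum_mem _ fun r _ => ?_
    refine Ideal.mul_mem_left _ _ ?_
    have : (Matrix.of fun i => fun j => M j (r i)) = (M.submatrix _root_.id r)ᵀ := by
      ext i j; rfl
    rw [this, Matrix.det_transpose]
    exact Ideal.subset_span ⟨_root_.id, r, rfl⟩
  · rw [Ideal.span_le]
    rintro x ⟨r, c, rfl⟩
    by_cases hr : Function.Injective r
    · have hbij : Function.Bijective r := (Finite.injective_iff_bijective).mp hr
      set e : Equiv.Perm ι := Equiv.ofBijective r hbij with he
      have hsub : M.submatrix r c = (M.submatrix _root_.id c).submatrix ⇑e _root_.id := by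
        ext i j; rfl
      have base : (M.submatrix _root_.id c).det ∈
          detIdeal (LinearMap.range M.mulVecLin) := by
        have hform : (M.submatrix _root_.id c) = (Matrix.of fun i => M.mulVec (Pi.single (c i) 1))ᵀ := by
          ext i j
          simp [Matrix.mulVec_single, Matrix.submatrix_apply]
        rw [hform, Matrix.det_transpose]
        exact det_mem_detIdeal _ _ fun i => ⟨Pi.single (c i) 1, rfl⟩
      rw [hsub, Matrix.det_permute]
      exact Ideal.mul_mem_left _ _ base
    · rw [Function.not_injective_iff] at hr
      obtain ⟨i, j, heq, hij⟩ := hr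
      have : (M.submatrix r c).det = 0 := by
        refine det_rows_eq_zero _ hij ?_
        funext k
        simp [Matrix.submatrix_apply, heq]
      rw [this]
      exact Submodule.zero_mem _
/-- `ι` is equivalent to the left elements of `ι ⊕ κ`. -/
def leftEquiv (ι κ : Type*) : ι ≃ {x : ι ⊕ κ // x.isLeft} where
  toFun i := ⟨Sum.inl i, rfl⟩
  invFun x := x.1.getLeft x.2
  left_inv i := rfl
  right_inv := by rintro ⟨(i | j), h⟩
                  · rfl
                  · exact absurd h (by simp)

/-- `κ` is equivalent to the non-left elements of `ι ⊕ κ`. -/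
def rightEquiv (ι κ : Type*) : κ ≃ {x : ι ⊕ κ // ¬ x.isLeft} where
  toFun j := ⟨Sum.inr j, by simp⟩
  invFun x := x.1.getRight (Sum.not_isLeft.mp x.2)
  left_inv j := rfl
  right_inv := by rintro ⟨(i | j), h⟩
                  · exact absurd rfl h
                  · rfl

section Mods

variable {ι κ : Type*} [Fintype ι] [DecidableEq ι] [Fintype κ] [DecidableEq κ]
variable {A : Type*} [AddCommGroup A] [Module R A]

theorem detIdeal_ker_funLeft {η η' : Type*} [Fintype η] [DecidableEq η]
    [Fintype η'] [DecidableEq η'] (e : η ≃ η') (h : (η → R) →ₗ[R] A) :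
    detIdeal (ker (h ∘ₗ funLeft R R (e : η → η'))) = detIdeal (ker h) := by
  apply le_antisymm
  · rw [detIdeal, Ideal.span_le]
    rintro x ⟨v, hv, rfl⟩
    have hvmem : ∀ p, (v p) ∘ e ∈ ker h := fun p => hv p
    have : (Matrix.of v).det = (Matrix.of fun i j => v (e i) (e j)).det := by
      rw [show (Matrix.of fun i j => v (e i) (e j)) = (Matrix.of v).submatrix ⇑e ⇑e from rfl,
        Matrix.det_submatrix_equiv_self]
    rw [this]
    exact det_mem_detIdeal _ _ fun i => hvmem (e i)
  · rw [detIdeal, Ideal.span_le]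
    rintro x ⟨v, hv, rfl⟩
    have : (Matrix.of v).det = (Matrix.of fun p q => v (e.symm p) (e.symm q)).det := by
      rw [show (Matrix.of fun p q => v (e.symm p) (e.symm q))
          = (Matrix.of v).submatrix ⇑e.symm ⇑e.symm from rfl,
        Matrix.det_submatrix_equiv_self]
    rw [this]
    refine det_mem_detIdeal _ _ fun p => ?_
    show (h ∘ₗ funLeft R R (e : η → η')) (fun q => v (e.symm p) (e.symm q)) = 0
    have : (fun q => v (e.symm p) (e.symm q)) ∘ e = v (e.symm p) := by
      funext j; simp
    rw [LinearMap.comp_apply, show (funLeft R R (e : η → η'))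
        (fun q => v (e.symm p) (e.symm q)) = (fun q => v (e.symm p) (e.symm q)) ∘ e from rfl,
      this]
    exact hv _

theorem detIdeal_ker_sum (g : (ι → R) →ₗ[R] A) (g' : (κ → R) →ₗ[R] A)
    (hg : Function.Surjective g) :
    detIdeal (ker g) =
      detIdeal (ker (g ∘ₗ funLeft R R Sum.inl + g' ∘ₗ funLeft R R Sum.inr)) := by
  classical
  set g'' : ((ι ⊕ κ) → R) →ₗ[R] A := g ∘ₗ funLeft R R Sum.inl + g' ∘ₗ funLeft R R Sum.inr
    with hg''
  have happ : ∀ x : (ι ⊕ κ) → R, g'' x = g (x ∘ Sum.inl) + g' (x ∘ Sum.inr) := fun x => rfl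
  choose u hu using fun j : κ => hg (g' (Pi.single j 1))
  set L : (κ → R) →ₗ[R] (ι → R) := (Pi.basisFun R κ).constr ℕ u with hLdef
  have hL : ∀ y, g (L y) = g' y := by
    intro y
    have h2 : g ∘ₗ L = g' := by
      refine Module.Basis.ext (Pi.basisFun R κ) fun j => ?_
      rw [LinearMap.comp_apply, hLdef, Module.Basis.constr_basis, hu, Pi.basisFun_apply]
    exact LinearMap.congr_fun h2 y
  have hLsum : ∀ (y : κ → R) (i : ι), L y i = ∑ j, y j * L (Pi.single j 1) i := by
    intro y i
    have hy : y = ∑ j, y j • (Pi.single j 1 : κ → R) := by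
      funext j'
      rw [Finset.sum_apply]
      simp [Pi.single_apply, mul_ite]
    conv_lhs => rw [hy]
    rw [map_sum, Finset.sum_apply]
    simp [smul_eq_mul]
  apply le_antisymm
  · -- detIdeal (ker g) ≤ detIdeal (ker g'')
    rw [detIdeal, Ideal.span_le]
    rintro x ⟨v, hv, rfl⟩
    set V : Matrix (ι ⊕ κ) (ι ⊕ κ) R :=
      Matrix.fromBlocks (Matrix.of v) 0 (Matrix.of fun j i => -(L (Pi.single j 1) i)) 1
      with hV
    have hdet : (Matrix.of v).det = (Matrix.of fun p q => V p q).det := by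
      rw [show (Matrix.of fun p q => V p q) = V from rfl, hV,
        Matrix.det_fromBlocks_zero₁₂, Matrix.det_one, mul_one]
    rw [hdet]
    refine det_mem_detIdeal _ _ fun p => ?_
    show g'' (V p) = 0
    rw [happ]
    cases p with
    | inl i =>
      have e1 : V (Sum.inl i) ∘ Sum.inl = v i := by funext i'; simp [hV]
      have e2 : V (Sum.inl i) ∘ Sum.inr = 0 := by funext j; simp [hV]
      rw [e1, e2, map_zero, add_zero]
      exact hv i
    | inr j =>
      have e1 : V (Sum.inr j) ∘ Sum.inl = -(L (Pi.single j 1)) := by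
        funext i; simp [hV]
      have e2 : V (Sum.inr j) ∘ Sum.inr = Pi.single j 1 := by
        funext j'
        simp [hV, Matrix.one_apply, Pi.single_apply, eq_comm]
      rw [e1, e2, map_neg, hL, neg_add_cancel]
  · -- detIdeal (ker g'') ≤ detIdeal (ker g)
    rw [detIdeal, Ideal.span_le]
    rintro x ⟨v, hv, rfl⟩
    set z : (ι ⊕ κ) → ι → R := fun p => (v p ∘ Sum.inl) + L (v p ∘ Sum.inr) with hzdef
    have hz : ∀ p, z p ∈ ker g := by
      intro p
      have h4 : g (v p ∘ Sum.inl) + g' (v p ∘ Sum.inr) = 0 := by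
        rw [← happ]; exact hv p
      show g ((v p ∘ Sum.inl) + L (v p ∘ Sum.inr)) = 0
      rw [map_add, hL]
      exact h4
    set U : Matrix (ι ⊕ κ) (ι ⊕ κ) R :=
      Matrix.fromBlocks 1 0 (Matrix.of fun j i => L (Pi.single j 1) i) 1 with hU
    have hdetU : U.det = 1 := by
      rw [hU, Matrix.det_fromBlocks_zero₁₂, Matrix.det_one, Matrix.det_one, one_mul]  
    have hW : Matrix.of v * U = Matrix.of fun p => ∑ o ∈ (univ : Finset (Option κ)),
        (Option.elim o 1 fun j => v p (Sum.inr j)) •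
        (Option.elim o (Sum.elim (z p) 0) fun j => Sum.elim 0 (Pi.single j 1)) := by
      funext p q
      rw [Matrix.mul_apply]
      rw [show (Matrix.of fun p => ∑ o ∈ (univ : Finset (Option κ)),
          (Option.elim o 1 fun j => v p (Sum.inr j)) •
          (Option.elim o (Sum.elim (z p) 0) fun j => Sum.elim 0 (Pi.single j 1))) p q
        = (∑ o ∈ (univ : Finset (Option κ)),
          (Option.elim o 1 fun j => v p (Sum.inr j)) •
          (Option.elim o (Sum.elim (z p) 0) fun j => Sum.elim 0 (Pi.single j 1))) q from rfl,
        Finset.sum_apply]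
      rw [univ_option, Finset.sum_insertNone]
      rw [Fintype.sum_sum_type]
      cases q with
      | inl i =>
        have hU11 : ∀ i', U (Sum.inl i') (Sum.inl i) = (1 : Matrix ι ι R) i' i := by
          intro i'; simp [hU]
        have hU21 : ∀ j, U (Sum.inr j) (Sum.inl i) = L (Pi.single j 1) i := by
          intro j; simp [hU]
        simp only [hU11, hU21, Option.elim, one_smul, Pi.smul_apply, smul_eq_mul, one_mul,
          Sum.elim_inl, Sum.elim_inr, Pi.zero_apply, mul_zero, Finset.sum_const_zero,
          add_zero, Matrix.of_apply, Matrix.one_apply, mul_ite, mul_one,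
          Finset.sum_ite_eq', Finset.mem_univ, if_true]
        show v p (Sum.inl i) + ∑ x : κ, v p (Sum.inr x) * L (Pi.single x 1) i = z p i
        exact (congrArg (fun t => v p (Sum.inl i) + t) (hLsum (v p ∘ Sum.inr) i).symm : _)
      | inr j0 =>
        have hU12 : ∀ i', U (Sum.inl i') (Sum.inr j0) = 0 := by
          intro i'; simp [hU]
        have hU22 : ∀ j, U (Sum.inr j) (Sum.inr j0) = (1 : Matrix κ κ R) j j0 := by
          intro j; simp [hU]
        simp only [hU12, hU22, Option.elim, one_smul, Pi.smul_apply, smul_eq_mul, one_mul,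
          Sum.elim_inl, Sum.elim_inr, Pi.zero_apply, mul_zero, Finset.sum_const_zero,
          zero_add, Matrix.of_apply]
        simp [Matrix.one_apply, Pi.single_apply, mul_ite, Finset.sum_ite_eq']
    have h3 : (Matrix.of v).det = (Matrix.of fun p => ∑ o ∈ (univ : Finset (Option κ)),
        (Option.elim o 1 fun j => v p (Sum.inr j)) •
        (Option.elim o (Sum.elim (z p) 0) fun j => Sum.elim 0 (Pi.single j 1))).det := by
      rw [← hW, Matrix.det_mul, hdetU, mul_one]
    rw [h3, det_expand (fun _ => (univ : Finset (Option κ)))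
      (fun p o => Option.elim o 1 fun j => v p (Sum.inr j))
      (fun p o => Option.elim o (Sum.elim (z p) 0) fun j => Sum.elim 0 (Pi.single j 1))]
    refine Ideal.sum_mem _ fun r _ => Ideal.mul_mem_left _ _ ?_
    -- show the base determinant lies in detIdeal (ker g)
    set mat : Matrix (ι ⊕ κ) (ι ⊕ κ) R := Matrix.of fun p =>
      Option.elim (r p) (Sum.elim (z p) 0) fun j => Sum.elim 0 (Pi.single j 1) with hmat
    show mat.det ∈ detIdeal (ker g)
    by_cases hinj : ∀ p p' : ι ⊕ κ, r p = r p' → (r p).isSome → p = p'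
    · have hsupp1 : ∀ pp qq, (r pp = none) → ¬ ((Sum.isLeft qq) : Prop) → mat pp qq = 0 := by
        intro pp qq hP hq'
        rw [show mat pp qq = Option.elim (r pp) (Sum.elim (z pp) 0)
          (fun j => Sum.elim 0 (Pi.single j 1)) qq from rfl, hP]
        cases qq with
        | inl a => exact absurd rfl hq'
        | inr b => rfl
      have hsupp2 : ∀ pp qq, ¬ (r pp = none) → ((Sum.isLeft qq) : Prop) → mat pp qq = 0 := by
        intro pp qq hP hq'
        obtain ⟨j, hj⟩ := Option.ne_none_iff_exists'.mp hP
        rw [show mat pp qq = Option.elim (r pp) (Sum.elim (z pp) 0)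
          (fun j => Sum.elim 0 (Pi.single j 1)) qq from rfl, hj]
        cases qq with
        | inl a => rfl
        | inr b => simp at hq'
      have hinj2 : Function.Injective (fun x : {p : ι ⊕ κ // ¬ (r p = none)} =>
          (r x.1).get (Option.isSome_iff_ne_none.mpr x.2)) := by
        rintro ⟨p, hp⟩ ⟨p', hp'⟩ h
        have hr : r p = r p' := by
          rw [← Option.some_get (Option.isSome_iff_ne_none.mpr hp),
            ← Option.some_get (Option.isSome_iff_ne_none.mpr hp')]
          exact congrArg _ h
        exact Subtype.ext (hinj p p' hr (Option.isSome_iff_ne_none.mpr hp))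
      have hcard1 : Fintype.card {p : ι ⊕ κ // ¬ (r p = none)} ≤ Fintype.card κ :=
        Fintype.card_le_of_injective _ hinj2
      have hcard2 : Fintype.card {p : ι ⊕ κ // ¬ (r p = none)} =
          Fintype.card (ι ⊕ κ) - Fintype.card {p : ι ⊕ κ // r p = none} :=
        Fintype.card_subtype_compl _
      have hcard3 : Fintype.card {p : ι ⊕ κ // r p = none} ≤ Fintype.card (ι ⊕ κ) :=
        Fintype.card_subtype_le _
      have hcardsum : Fintype.card (ι ⊕ κ) = Fintype.card ι + Fintype.card κ :=
        Fintype.card_sum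
      have hcardL : Fintype.card {x : ι ⊕ κ // x.isLeft} = Fintype.card ι :=
        (Fintype.card_congr (leftEquiv ι κ)).symm
      have hle : Fintype.card ι ≤ Fintype.card {p : ι ⊕ κ // r p = none} := by omega
      rcases eq_or_lt_of_le hle with heq | hlt
      · have hcardP' : Fintype.card {p : ι ⊕ κ // ¬ (r p = none)} = Fintype.card κ := by
          omega
        obtain ⟨uu, hsplit⟩ := det_split mat (fun p => r p = none)
          (fun x => (x.isLeft : Prop)) hsupp1 hsupp2
          (Fintype.equivOfCardEq heq)
          (leftEquiv ι κ)
          (Fintype.equivOfCardEq hcardP'.symm)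
          (rightEquiv ι κ)
        rw [hsplit]
        refine Ideal.mul_mem_left _ _ (Ideal.mul_mem_right _ _ ?_)
        have hA : mat.submatrix
            (fun a => ((Fintype.equivOfCardEq heq a : {p : ι ⊕ κ // r p = none}) : ι ⊕ κ))
            (fun a => ((leftEquiv ι κ a) : ι ⊕ κ)) =
            Matrix.of fun a => z ((Fintype.equivOfCardEq heq a : {p : ι ⊕ κ // r p = none}) : ι ⊕ κ) := by
          ext a b
          have h0 : r ((Fintype.equivOfCardEq heq a : {p : ι ⊕ κ // r p = none}) : ι ⊕ κ) = none :=
            (Fintype.equivOfCardEq heq a).2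
          show mat _ (Sum.inl b) = _
          rw [show mat ((Fintype.equivOfCardEq heq a : {p : ι ⊕ κ // r p = none}) : ι ⊕ κ)
            (Sum.inl b) = Option.elim (r _) (Sum.elim (z _) 0)
            (fun j => Sum.elim 0 (Pi.single j 1)) (Sum.inl b) from rfl, h0]
          rfl
        rw [hA]
        exact det_mem_detIdeal _ _ fun a => hz _
      · have : mat.det = 0 := by
          refine det_eq_zero_of_card_lt mat (fun p => r p = none)
            (fun x => (x.isLeft : Prop)) hsupp1 ?_
          show Fintype.card {x : ι ⊕ κ // x.isLeft} < Fintype.card {p : ι ⊕ κ // r p = none}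
          omega
        rw [this]
        exact Submodule.zero_mem _
    · push_neg at hinj
      obtain ⟨p, p', h1, h2, h3⟩ := hinj
      obtain ⟨j, hj⟩ := Option.isSome_iff_exists.mp h2
      have : mat.det = 0 := by
        refine det_rows_eq_zero mat h3 ?_
        rw [show mat p = Option.elim (r p) (Sum.elim (z p) 0)
            (fun j => Sum.elim 0 (Pi.single j 1)) from rfl,
          show mat p' = Option.elim (r p') (Sum.elim (z p') 0)
            (fun j => Sum.elim 0 (Pi.single j 1)) from rfl, hj, ← h1, hj]
        rfl
      rw [this]
      exact Submodule.zero_mem _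

theorem detIdeal_ker_eq (g : (ι → R) →ₗ[R] A) (g' : (κ → R) →ₗ[R] A)
    (hg : Function.Surjective g) (hg' : Function.Surjective g') :
    detIdeal (ker g) = detIdeal (ker g') := by
  have h1 := detIdeal_ker_sum g g' hg
  have h2 := detIdeal_ker_sum g' g hg'
  have h3 : (g' ∘ₗ funLeft R R Sum.inl + g ∘ₗ funLeft R R Sum.inr) =
      (g ∘ₗ funLeft R R Sum.inl + g' ∘ₗ funLeft R R Sum.inr) ∘ₗ
        funLeft R R ((Equiv.sumComm ι κ) : ι ⊕ κ → κ ⊕ ι) := by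
    apply LinearMap.ext
    intro x
    show g' (x ∘ Sum.inl) + g (x ∘ Sum.inr)
      = g ((x ∘ Sum.swap) ∘ Sum.inl) + g' ((x ∘ Sum.swap) ∘ Sum.inr)
    have e1 : (x ∘ Sum.swap) ∘ Sum.inl = x ∘ Sum.inr := rfl
    have e2 : (x ∘ Sum.swap) ∘ Sum.inr = x ∘ Sum.inl := rfl
    rw [e1, e2, add_comm]
  rw [h1, h2, h3, detIdeal_ker_funLeft]


end Mods

theorem minors_fromBlocks {na ma nb mb : ℕ} (MA : Matrix (Fin na) (Fin ma) R)
    (MB : Matrix (Fin nb) (Fin mb) R) :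
    Ideal.span {x | ∃ (r : Fin na ⊕ Fin nb → Fin na ⊕ Fin nb)
        (c : Fin na ⊕ Fin nb → Fin ma ⊕ Fin mb),
        x = ((Matrix.fromBlocks MA 0 0 MB).submatrix r c).det}
      = minorsIdeal MA na * minorsIdeal MB nb := by
  classical
  apply le_antisymm
  · rw [Ideal.span_le]
    rintro x ⟨r, c, rfl⟩
    set D : Matrix (Fin na ⊕ Fin nb) (Fin ma ⊕ Fin mb) R := Matrix.fromBlocks MA 0 0 MB
      with hD
    set S : Matrix (Fin na ⊕ Fin nb) (Fin na ⊕ Fin nb) R := D.submatrix r c with hS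
    show S.det ∈ _
    by_cases hr : Function.Injective r
    · have hinjL : Function.Injective (fun x : {i // ((r i).isLeft : Prop)} =>
          (r x.1).getLeft x.2) := by
        rintro ⟨i, hi⟩ ⟨i', hi'⟩ hh
        refine Subtype.ext (hr ?_)
        have e1 : r i = Sum.inl ((r i).getLeft hi) :=
          Sum.eq_left_iff_getLeft_eq.mpr ⟨hi, rfl⟩
        have e2 : r i' = Sum.inl ((r i').getLeft hi') :=
          Sum.eq_left_iff_getLeft_eq.mpr ⟨hi', rfl⟩
        rw [e1, e2]
        exact congrArg Sum.inl hh
      have hinjR : Function.Injective (fun x : {i // ¬ ((r i).isLeft : Prop)} =>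
          (r x.1).getRight (Sum.not_isLeft.mp x.2)) := by
        rintro ⟨i, hi⟩ ⟨i', hi'⟩ hh
        refine Subtype.ext (hr ?_)
        have e1 : r i = Sum.inr ((r i).getRight (Sum.not_isLeft.mp hi)) :=
          Sum.eq_right_iff_getRight_eq.mpr ⟨Sum.not_isLeft.mp hi, rfl⟩
        have e2 : r i' = Sum.inr ((r i').getRight (Sum.not_isLeft.mp hi')) :=
          Sum.eq_right_iff_getRight_eq.mpr ⟨Sum.not_isLeft.mp hi', rfl⟩
        rw [e1, e2]
        exact congrArg Sum.inr hh
      have hca : Fintype.card {i // ((r i).isLeft : Prop)} ≤ na := by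
        have := Fintype.card_le_of_injective _ hinjL
        simpa using this
      have hcb : Fintype.card {i // ¬ ((r i).isLeft : Prop)} ≤ nb := by
        have := Fintype.card_le_of_injective _ hinjR
        simpa using this
      have hcompl : Fintype.card {i // ¬ ((r i).isLeft : Prop)} =
          Fintype.card (Fin na ⊕ Fin nb) - Fintype.card {i // ((r i).isLeft : Prop)} :=
        Fintype.card_subtype_compl _
      have hcle : Fintype.card {i // ((r i).isLeft : Prop)} ≤ Fintype.card (Fin na ⊕ Fin nb) :=
        Fintype.card_subtype_le _
      have hsumcard : Fintype.card (Fin na ⊕ Fin nb) = na + nb := by simp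
      have hPna : Fintype.card {i // ((r i).isLeft : Prop)} = na := by omega
      have hPnb : Fintype.card {i // ¬ ((r i).isLeft : Prop)} = nb := by omega
      have hsupp1 : ∀ i j, ((r i).isLeft : Prop) → ¬ ((c j).isLeft : Prop) → S i j = 0 := by
        intro i j hi hj
        obtain ⟨a, ha⟩ := Sum.isLeft_iff.mp hi
        obtain ⟨b, hb⟩ := Sum.isRight_iff.mp (Sum.not_isLeft.mp hj)
        show D (r i) (c j) = 0
        rw [ha, hb, hD]
        simp
      have hsupp2 : ∀ i j, ¬ ((r i).isLeft : Prop) → ((c j).isLeft : Prop) → S i j = 0 := by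
        intro i j hi hj
        obtain ⟨b, hb⟩ := Sum.isRight_iff.mp (Sum.not_isLeft.mp hi)
        obtain ⟨a, ha⟩ := Sum.isLeft_iff.mp hj
        show D (r i) (c j) = 0
        rw [ha, hb, hD]
        simp
      have hcomplc : Fintype.card {j // ¬ ((c j).isLeft : Prop)} =
          Fintype.card (Fin na ⊕ Fin nb) - Fintype.card {j // ((c j).isLeft : Prop)} :=
        Fintype.card_subtype_compl _
      have hclec : Fintype.card {j // ((c j).isLeft : Prop)} ≤ Fintype.card (Fin na ⊕ Fin nb) :=
        Fintype.card_subtype_le _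
      rcases lt_trichotomy (Fintype.card {j // ((c j).isLeft : Prop)}) na with hlt | heq | hgt
      · have : S.det = 0 := by
          refine det_eq_zero_of_card_lt S (fun i => ((r i).isLeft : Prop))
            (fun j => ((c j).isLeft : Prop)) hsupp1 ?_
          show Fintype.card {j // ((c j).isLeft : Prop)} <
            Fintype.card {i // ((r i).isLeft : Prop)}
          omega
        rw [this]; exact Submodule.zero_mem _
      · have hQnb : Fintype.card {j // ¬ ((c j).isLeft : Prop)} = nb := by omega
        have e1 : Fin na ≃ {i // ((r i).isLeft : Prop)} :=
          Fintype.equivOfCardEq (by rw [Fintype.card_fin]; exact hPna.symm)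
        have e2 : Fin na ≃ {j // ((c j).isLeft : Prop)} :=
          Fintype.equivOfCardEq (by rw [Fintype.card_fin]; exact heq.symm)
        have e3 : Fin nb ≃ {i // ¬ ((r i).isLeft : Prop)} :=
          Fintype.equivOfCardEq (by rw [Fintype.card_fin]; exact hPnb.symm)
        have e4 : Fin nb ≃ {j // ¬ ((c j).isLeft : Prop)} :=
          Fintype.equivOfCardEq (by rw [Fintype.card_fin]; exact hQnb.symm)
        obtain ⟨uu, hsplit⟩ := det_split S (fun i => ((r i).isLeft : Prop))
          (fun j => ((c j).isLeft : Prop)) hsupp1 hsupp2 e1 e2 e3 e4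
        rw [hsplit]
        refine Ideal.mul_mem_left _ _ (Ideal.mul_mem_mul ?_ ?_)
        · have hform : S.submatrix (fun a => ((e1 a) : Fin na ⊕ Fin nb))
              (fun a => ((e2 a) : Fin na ⊕ Fin nb)) =
              MA.submatrix (fun a => (r (e1 a).1).getLeft (e1 a).2)
                (fun a => (c (e2 a).1).getLeft (e2 a).2) := by
            ext a b
            show D (r (e1 a).1) (c (e2 b).1) = _
            rcases hx : r (e1 a).1 with a' | b'
            · rcases hy : c (e2 b).1 with a'' | b''
              · simp [hx, hy, hD]
              · exact absurd (e2 b).2 (by simp [hy])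
            · exact absurd (e1 a).2 (by simp [hx])
          rw [hform]
          exact Ideal.subset_span ⟨_, _, rfl⟩
        · have hform : S.submatrix (fun b => ((e3 b) : Fin na ⊕ Fin nb))
              (fun b => ((e4 b) : Fin na ⊕ Fin nb)) =
              MB.submatrix (fun b => (r (e3 b).1).getRight (Sum.not_isLeft.mp (e3 b).2))
                (fun b => (c (e4 b).1).getRight (Sum.not_isLeft.mp (e4 b).2)) := by
            ext a b
            show D (r (e3 a).1) (c (e4 b).1) = _
            rcases hx : r (e3 a).1 with a' | b'
            · exact absurd (by rw [hx]; rfl) (e3 a).2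
            · rcases hy : c (e4 b).1 with a'' | b''
              · exact absurd (by rw [hy]; rfl) (e4 b).2
              · simp [hx, hy, hD]
          rw [hform]
          exact Ideal.subset_span ⟨_, _, rfl⟩
      · have : S.det = 0 := by
          refine det_eq_zero_of_card_lt S (fun i => ¬ ((r i).isLeft : Prop))
            (fun j => ¬ ((c j).isLeft : Prop)) (fun i j hi hj => hsupp2 i j hi (not_not.mp hj))
            ?_
          show Fintype.card {j // ¬ ((c j).isLeft : Prop)} <
            Fintype.card {i // ¬ ((r i).isLeft : Prop)}
          omega
        rw [this]; exact Submodule.zero_mem _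
    · rw [Function.not_injective_iff] at hr
      obtain ⟨i, j, hfeq, hij⟩ := hr
      have : S.det = 0 := by
        refine det_rows_eq_zero _ hij ?_
        funext k
        show D (r i) (c k) = D (r j) (c k)
        rw [hfeq]
      rw [this]; exact Submodule.zero_mem _
  · rw [minorsIdeal, minorsIdeal, Ideal.span_mul_span', Ideal.span_le]
    rintro x hx
    rw [Set.mem_mul] at hx
    obtain ⟨a, ⟨r, c, rfl⟩, b, ⟨r', c', rfl⟩, rfl⟩ := hx
    have hblock : (Matrix.fromBlocks MA 0 0 MB).submatrix (Sum.map r r') (Sum.map c c')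
        = Matrix.fromBlocks (MA.submatrix r c) 0 0 (MB.submatrix r' c') := by
      ext i j
      cases i <;> cases j <;> simp
    refine Ideal.subset_span ⟨Sum.map r r', Sum.map c c', ?_⟩
    rw [hblock, Matrix.det_fromBlocks_zero₁₂]


section Prod2

variable {A B : Type*} [AddCommGroup A] [Module R A] [AddCommGroup B] [Module R B]

theorem surj_prod {na nb : ℕ} (gA : (Fin na → R) →ₗ[R] A) (gB : (Fin nb → R) →ₗ[R] B)
    (hgA : Function.Surjective gA) (hgB : Function.Surjective gB) :
    Function.Surjective ((gA ∘ₗ funLeft R R Sum.inl).prod (gB ∘ₗ funLeft R R Sum.inr)) := by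
  rintro ⟨a, b⟩
  obtain ⟨xa, rfl⟩ := hgA a
  obtain ⟨xb, rfl⟩ := hgB b
  exact ⟨Sum.elim xa xb, rfl⟩

theorem ker_prod {na ma nb mb : ℕ} (MA : Matrix (Fin na) (Fin ma) R)
    (gA : (Fin na → R) →ₗ[R] A) (hkerA : ker gA = range MA.mulVecLin)
    (MB : Matrix (Fin nb) (Fin mb) R)
    (gB : (Fin nb → R) →ₗ[R] B) (hkerB : ker gB = range MB.mulVecLin) :
    ker ((gA ∘ₗ funLeft R R Sum.inl).prod (gB ∘ₗ funLeft R R Sum.inr)) =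
      range (Matrix.fromBlocks MA 0 0 MB).mulVecLin := by
  ext x
  constructor
  · intro hx
    have h0 : (gA (x ∘ Sum.inl), gB (x ∘ Sum.inr)) = (0, 0) := mem_ker.mp hx
    have hA : x ∘ Sum.inl ∈ ker gA := mem_ker.mpr (congrArg Prod.fst h0)
    have hB : x ∘ Sum.inr ∈ ker gB := mem_ker.mpr (congrArg Prod.snd h0)
    rw [hkerA] at hA
    rw [hkerB] at hB
    obtain ⟨wa, hwa⟩ := hA
    obtain ⟨wb, hwb⟩ := hB
    refine ⟨Sum.elim wa wb, ?_⟩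
    show (Matrix.fromBlocks MA 0 0 MB) *ᵥ (Sum.elim wa wb) = x
    rw [Matrix.fromBlocks_mulVec]
    simp only [Matrix.zero_mulVec, add_zero, zero_add]
    funext q
    cases q with
    | inl i => exact congrFun hwa i
    | inr j => exact congrFun hwb j
  · rintro ⟨w, rfl⟩
    have hw : (Matrix.fromBlocks MA 0 0 MB).mulVecLin w =
        Sum.elim (MA *ᵥ (w ∘ Sum.inl)) (MB *ᵥ (w ∘ Sum.inr)) := by
      have hsplit : w = Sum.elim (w ∘ Sum.inl) (w ∘ Sum.inr) := by
        funext q; cases q <;> rfl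
      show (Matrix.fromBlocks MA 0 0 MB) *ᵥ w = _
      conv_lhs => rw [hsplit]
      rw [Matrix.fromBlocks_mulVec]
      simp
    rw [mem_ker, hw]
    have h1 : gA ((Sum.elim (MA *ᵥ (w ∘ Sum.inl)) (MB *ᵥ (w ∘ Sum.inr))) ∘ Sum.inl) = 0 := by
      have : (Sum.elim (MA *ᵥ (w ∘ Sum.inl)) (MB *ᵥ (w ∘ Sum.inr))) ∘ Sum.inl
          = MA *ᵥ (w ∘ Sum.inl) := rfl
      rw [this, ← mem_ker, hkerA]
      exact ⟨w ∘ Sum.inl, rfl⟩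
    have h2 : gB ((Sum.elim (MA *ᵥ (w ∘ Sum.inl)) (MB *ᵥ (w ∘ Sum.inr))) ∘ Sum.inr) = 0 := by
      have : (Sum.elim (MA *ᵥ (w ∘ Sum.inl)) (MB *ᵥ (w ∘ Sum.inr))) ∘ Sum.inr
          = MB *ᵥ (w ∘ Sum.inr) := rfl
      rw [this, ← mem_ker, hkerB]
      exact ⟨w ∘ Sum.inr, rfl⟩
    show (gA ((Sum.elim (MA *ᵥ (w ∘ Sum.inl)) (MB *ᵥ (w ∘ Sum.inr))) ∘ Sum.inl),
      gB ((Sum.elim (MA *ᵥ (w ∘ Sum.inl)) (MB *ᵥ (w ∘ Sum.inr))) ∘ Sum.inr)) = (0, 0)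
    rw [h1, h2]


end Prod2

theorem gcd_mul_ideal {R : Type*} [CommRing R] [IsDomain R] [IsNoetherianRing R]
    [UniqueFactorizationMonoid R] {I J : Ideal R} {dI dJ dC : R}
    (hI : IsGCDOfIdeal dI I) (hJ : IsGCDOfIdeal dJ J) (hC : IsGCDOfIdeal dC (I * J)) :
    Associated dC (dI * dJ) := by
  classical
  letI : StrongNormalizationMonoid R := UniqueFactorizationMonoid.normalizationMonoid
  letI : StrongNormalizedGCDMonoid R := UniqueFactorizationMonoid.toStrongNormalizedGCDMonoid R
  obtain ⟨s, hs⟩ := IsNoetherian.noetherian I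
  obtain ⟨t, ht⟩ := IsNoetherian.noetherian J
  set gI : R := s.gcd _root_.id with hgI
  set gJ : R := t.gcd _root_.id with hgJ
  have hgI_dvd : ∀ x ∈ I, gI ∣ x := by
    intro x hx
    rw [← hs] at hx
    have hle : Ideal.span (↑s : Set R) ≤ Ideal.span {gI} :=
      Ideal.span_le.mpr fun b hb => Ideal.mem_span_singleton.mpr (Finset.gcd_dvd hb)
    exact Ideal.mem_span_singleton.mp (hle hx)
  have hgJ_dvd : ∀ x ∈ J, gJ ∣ x := by
    intro x hx
    rw [← ht] at hx
    have hle : Ideal.span (↑t : Set R) ≤ Ideal.span {gJ} :=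
      Ideal.span_le.mpr fun b hb => Ideal.mem_span_singleton.mpr (Finset.gcd_dvd hb)
    exact Ideal.mem_span_singleton.mp (hle hx)
  have hIg : Associated dI gI :=
    associated_of_dvd_dvd
      (Finset.dvd_gcd fun b hb => hI.1 b (by rw [← hs]; exact Ideal.subset_span hb))
      (hI.2 gI hgI_dvd)
  have hJg : Associated dJ gJ :=
    associated_of_dvd_dvd
      (Finset.dvd_gcd fun b hb => hJ.1 b (by rw [← ht]; exact Ideal.subset_span hb))
      (hJ.2 gJ hgJ_dvd)
  have hdvd1 : dI * dJ ∣ dC := by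
    refine hC.2 _ fun x hx => ?_
    have hIle : I ≤ Ideal.span {dI} := fun y hy => Ideal.mem_span_singleton.mpr (hI.1 y hy)
    have hJle : J ≤ Ideal.span {dJ} := fun y hy => Ideal.mem_span_singleton.mpr (hJ.1 y hy)
    have hmul : I * J ≤ Ideal.span {dI * dJ} := by
      rw [← Ideal.span_singleton_mul_span_singleton]
      exact Ideal.mul_mono hIle hJle
    exact Ideal.mem_span_singleton.mp (hmul hx)
  have hdvd2 : dC ∣ dI * dJ := by
    have hall : ∀ a ∈ s, ∀ b ∈ t, dC ∣ a * b := fun a ha b hb =>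
      hC.1 _ (Ideal.mul_mem_mul (by rw [← hs]; exact Ideal.subset_span ha)
        (by rw [← ht]; exact Ideal.subset_span hb))
    have h2 : ∀ a ∈ s, dC ∣ a * gJ := by
      intro a ha
      have h3 : dC ∣ t.gcd (fun b => a * _root_.id b) :=
        Finset.dvd_gcd fun b hb => hall a ha b hb
      rw [Finset.gcd_mul_left] at h3
      exact h3.trans (mul_dvd_mul_right (normalize_associated a).dvd gJ)
    have h4 : dC ∣ s.gcd (fun a => _root_.id a * gJ) := Finset.dvd_gcd fun a ha => h2 a ha
    rw [Finset.gcd_mul_right] at h4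
    have h5 : dC ∣ gI * gJ :=
      h4.trans (mul_dvd_mul_left gI (normalize_associated gJ).dvd)
    exact h5.trans (mul_dvd_mul hIg.symm.dvd hJg.symm.dvd)
  exact associated_of_dvd_dvd hdvd2 hdvd1


end CharPolyProdAux

/-- Over a Noetherian UFD `R`, for finitely generated modules `A`, `B`, one has
`Δ_0(A ⊕ B) = Δ_0(A) · Δ_0(B)` up to multiplication by a unit of `R`. -/
theorem charPoly_zero_prod
    {R : Type*} [CommRing R] [IsDomain R] [IsNoetherianRing R] [UniqueFactorizationMonoid R]
    {A B : Type*} [AddCommGroup A] [Module R A] [Module.Finite R A]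
    [AddCommGroup B] [Module R B] [Module.Finite R B]
    {na ma nb mb nc mc : ℕ}
    (MA : Matrix (Fin na) (Fin ma) R) (gA : (Fin na → R) →ₗ[R] A)
    (hgA : Function.Surjective gA)
    (hkerA : LinearMap.ker gA = LinearMap.range MA.mulVecLin)
    (MB : Matrix (Fin nb) (Fin mb) R) (gB : (Fin nb → R) →ₗ[R] B)
    (hgB : Function.Surjective gB)
    (hkerB : LinearMap.ker gB = LinearMap.range MB.mulVecLin)
    (MC : Matrix (Fin nc) (Fin mc) R) (gC : (Fin nc → R) →ₗ[R] (A × B))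
    (hgC : Function.Surjective gC)
    (hkerC : LinearMap.ker gC = LinearMap.range MC.mulVecLin)
    (dA dB dC : R)
    (hdA : IsGCDOfIdeal dA (elemIdeal MA 0))
    (hdB : IsGCDOfIdeal dB (elemIdeal MB 0))
    (hdC : IsGCDOfIdeal dC (elemIdeal MC 0)) :
    Associated dC (dA * dB) := by
  classical
  have hC : elemIdeal MC 0 = CharPolyProdAux.detIdeal (LinearMap.ker gC) := by
    have h1 : elemIdeal MC 0 = Ideal.span {x | ∃ (r : Fin nc → Fin nc) (c : Fin nc → Fin mc),
        x = (MC.submatrix r c).det} := rfl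
    rw [h1, ← CharPolyProdAux.detIdeal_range, hkerC]
  set g0 : ((Fin na ⊕ Fin nb) → R) →ₗ[R] A × B :=
    (gA ∘ₗ funLeft R R Sum.inl).prod (gB ∘ₗ funLeft R R Sum.inr) with hg0def
  have hg0 : Function.Surjective g0 := CharPolyProdAux.surj_prod gA gB hgA hgB
  have hker0 : LinearMap.ker g0 = LinearMap.range (Matrix.fromBlocks MA 0 0 MB).mulVecLin :=
    CharPolyProdAux.ker_prod MA gA hkerA MB gB hkerB
  have h2 : CharPolyProdAux.detIdeal (LinearMap.ker gC) = CharPolyProdAux.detIdeal (LinearMap.ker g0) :=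
    CharPolyProdAux.detIdeal_ker_eq gC g0 hgC hg0
  have h3 : CharPolyProdAux.detIdeal (LinearMap.ker g0) = elemIdeal MA 0 * elemIdeal MB 0 := by
    rw [hker0, CharPolyProdAux.detIdeal_range, CharPolyProdAux.minors_fromBlocks]
    rfl
  have hprod : elemIdeal MC 0 = elemIdeal MA 0 * elemIdeal MB 0 := by
    rw [hC, h2, h3]
  exact CharPolyProdAux.gcd_mul_ideal hdA hdB (hprod ▸ hdC)
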